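/- Let Z ∈ L with Z = x(Z), n ∈ 𝒩, n' a node or end-face with a bamboo (chain of valency-2 vertices v₁,…,v_s with self-intersections -b₁,…,-b_s, where α/β = [b₁,…,b_s] is the negative continued fraction) connecting n and n'. Then the multiplicity at the neighbour u = v₁ of n satisfies m_u(Z) = ⌈(β·m_n(Z) + m_{n'}(Z))/α⌉, where m_{n'}(Z) = 0 if n' ∉ 𝒩. -/

import Mathlib

/-- The negative continued fraction `[b₁,…,b_s] = b₁ - 1/(b₂ - 1/(⋯))` of a list of
rationals (using the convention `1/0 = 0`, so `negCF [b] = b`). -/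
def negCF : List ℚ → ℚ
  | [] => 0
  | x :: xs => x - 1 / negCF xs

/-- Auxiliary: numerator/denominator pair of a negative continued fraction. -/
def contPair : List ℤ → ℤ × ℤ
  | [] => (1, 0)
  | x :: xs => (x * (contPair xs).1 - (contPair xs).2, (contPair xs).1)

lemma contPair_props : ∀ l : List ℤ, (∀ x ∈ l, 2 ≤ x) →
    0 ≤ (contPair l).2 ∧ (contPair l).2 < (contPair l).1 ∧
      IsCoprime (contPair l).1 (contPair l).2 ∧ (l ≠ [] → 0 < (contPair l).2) := by
  intro l
  induction l with
  | nil =>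
    intro _
    refine ⟨le_refl _, by norm_num [contPair], ?_, by simp⟩
    simpa [contPair] using isCoprime_one_left
  | cons x xs ih =>
    intro h
    obtain ⟨h1, h2, h3, _⟩ := ih fun y hy => h y (List.mem_cons_of_mem _ hy)
    have hx : 2 ≤ x := h x List.mem_cons_self
    obtain ⟨u, v, huv⟩ := h3
    refine ⟨by simp only [contPair]; omega, ?_, ?_, ?_⟩
    · simp only [contPair]
      nlinarith
    · exact ⟨-v, u + v * x, by simp only [contPair]; linear_combination huv⟩
    · intro _
      simp only [contPair]
      omega

lemma negCF_eq : ∀ l : List ℤ, (∀ x ∈ l, 2 ≤ x) → l ≠ [] →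
    negCF (l.map (Int.cast : ℤ → ℚ)) = ((contPair l).1 : ℚ) / ((contPair l).2 : ℚ) := by
  intro l
  induction l with
  | nil => intro _ h; exact absurd rfl h
  | cons x xs ih =>
    intro h _
    by_cases hxs : xs = []
    · subst hxs
      simp [negCF, contPair]
    · obtain ⟨h1, h2, _, h4⟩ := contPair_props xs fun y hy => h y (List.mem_cons_of_mem _ hy)
      have hD : (0:ℚ) < ((contPair xs).2 : ℚ) := by exact_mod_cast h4 hxs
      have hN : (0:ℚ) < ((contPair xs).1 : ℚ) := by exact_mod_cast lt_of_le_of_lt h1 h2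
      simp only [List.map_cons, negCF]
      rw [ih (fun y hy => h y (List.mem_cons_of_mem _ hy)) hxs, one_div_div]
      simp only [contPair]
      push_cast
      field_simp

/-- The minimal sequence along a bamboo, built by successive ceilings. -/
def Mseq (Q : ℕ → ℤ) (e m0 : ℤ) : ℕ → ℤ
  | 0 => m0
  | r + 1 => ⌈((Q (r + 1) * Mseq Q e m0 r + e : ℤ) : ℚ) / ((Q r : ℚ))⌉

theorem stmt16 (s : ℕ) (hs : 1 ≤ s) (b : ℕ → ℤ)
    (hb : ∀ r, 1 ≤ r → r ≤ s → 2 ≤ b r)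
    (α β : ℤ) (hαpos : 0 < α) (hβ : 0 ≤ β ∧ β < α)
    (hgcd : Int.gcd α β = 1)
    (hcf : (α : ℚ) / (β : ℚ) = negCF (((List.range' 1 s).map fun r => ((b r : ℚ)))))
    (m : ℕ → ℤ)
    (hineq : ∀ r, 1 ≤ r → r ≤ s → m (r - 1) - b r * m r + m (r + 1) ≤ 0)
    (hmin : ∀ m' : ℕ → ℤ, m' 0 = m 0 → m' (s + 1) = m (s + 1) →
      (∀ r, 1 ≤ r → r ≤ s → m' (r - 1) - b r * m' r + m' (r + 1) ≤ 0) →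
      ∀ r ≤ s + 1, m r ≤ m' r) :
    m 1 = ⌈((β : ℚ) * (m 0 : ℚ) + (m (s + 1) : ℚ)) / (α : ℚ)⌉ := by
  set L : List ℤ := (List.range' 1 s).map b with hLdef
  have hLlen : L.length = s := by simp [hLdef]
  have hL2 : ∀ x ∈ L, 2 ≤ x := by
    intro x hx
    simp only [hLdef, List.mem_map] at hx
    obtain ⟨r, hr, rfl⟩ := hx
    rw [List.mem_range'_1] at hr
    exact hb r hr.1 (by omega)
  set Q : ℕ → ℤ := fun j => if j ≤ s then (contPair (L.drop j)).1 else 0 with hQdef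
  have hQs1 : Q (s + 1) = 0 := by simp [hQdef]
  have hdropnil : L.drop s = [] := by
    apply List.drop_eq_nil_of_le
    omega
  have hQs : Q s = 1 := by simp [hQdef, hdropnil, contPair]
  have hdropcons : ∀ j, j < s → L.drop j = b (j + 1) :: L.drop (j + 1) := by
    intro j hj
    rw [List.drop_eq_getElem_cons (by omega : j < L.length)]
    congr 1
    simp only [hLdef, List.getElem_map, List.getElem_range']
    congr 1
    omega
  have hQval : ∀ j, j ≤ s → Q j = (contPair (L.drop j)).1 := by
    intro j hj; simp [hQdef, hj]
  have hL2' : ∀ j, ∀ x ∈ L.drop j, 2 ≤ x := fun j x hx => hL2 x (List.mem_of_mem_drop hx)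
  have hQpos : ∀ j, j ≤ s → 0 < Q j := by
    intro j hj
    obtain ⟨h1, h2, _, _⟩ := contPair_props (L.drop j) (hL2' j)
    rw [hQval j hj]
    omega
  have hD : ∀ j, j ≤ s → (contPair (L.drop j)).2 = Q (j + 1) := by
    intro j hj
    rcases eq_or_lt_of_le hj with h | h
    · subst h
      simp [hdropnil, contPair, hQs1]
    · rw [hdropcons j h]
      simp only [contPair]
      exact (hQval (j + 1) (by omega)).symm
  have hQrec : ∀ t, t + 1 ≤ s → Q t = b (t + 1) * Q (t + 1) - Q (t + 2) := by
    intro t ht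
    rw [hQval t (by omega), hdropcons t (by omega)]
    simp only [contPair]
    rw [hD (t + 1) ht, hQval (t + 1) ht]
  -- identify α, β with Q 0, Q 1
  have hLne : L ≠ [] := by
    intro h
    rw [h] at hLlen
    simp at hLlen
    omega
  have hmapeq : ((List.range' 1 s).map fun r => ((b r : ℚ))) = L.map (Int.cast : ℤ → ℚ) := by
    simp [hLdef, List.map_map, Function.comp]
  have hQ1pos : 0 < Q 1 := hQpos 1 hs
  have hQ0pos : 0 < Q 0 := hQpos 0 (by omega)
  have hcf2 : (α : ℚ) / (β : ℚ) = (Q 0 : ℚ) / (Q 1 : ℚ) := by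
    rw [hmapeq, negCF_eq L hL2 hLne] at hcf
    have e1 : Q 0 = (contPair L).1 := by rw [hQval 0 (by omega), List.drop_zero]
    have e2 : (contPair L).2 = Q 1 := by
      have := hD 0 (by omega)
      rwa [List.drop_zero] at this
    rw [hcf, e1, e2]
  have hβpos : 0 < β := by
    rcases eq_or_lt_of_le hβ.1 with h | h
    · exfalso
      rw [← h] at hcf2
      have : (0:ℚ) < (Q 0 : ℚ) / (Q 1 : ℚ) :=
        div_pos (by exact_mod_cast hQ0pos) (by exact_mod_cast hQ1pos)
      simp at hcf2
      rw [← hcf2] at this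
      exact lt_irrefl _ this
    · exact h
  have hcross : α * Q 1 = Q 0 * β := by
    have h := (div_eq_div_iff (by exact_mod_cast hβpos.ne' : (β:ℚ) ≠ 0)
      (by exact_mod_cast hQ1pos.ne' : ((Q 1 : ℤ):ℚ) ≠ 0)).mp hcf2
    exact_mod_cast h
  have hcopαβ : IsCoprime α β := Int.isCoprime_iff_gcd_eq_one.mpr hgcd
  have hcopQ : IsCoprime (Q 0) (Q 1) := by
    obtain ⟨_, _, h3, _⟩ := contPair_props L hL2
    have e1 : Q 0 = (contPair L).1 := by rw [hQval 0 (by omega), List.drop_zero]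
    have e2 : (contPair L).2 = Q 1 := by
      have := hD 0 (by omega)
      rwa [List.drop_zero] at this
    rwa [e1, e2.symm]
  have hαQ0 : α = Q 0 := by
    refine Int.dvd_antisymm hαpos.le hQ0pos.le ?_ ?_
    · exact hcopαβ.dvd_of_dvd_mul_right ⟨Q 1, hcross.symm⟩
    · exact hcopQ.dvd_of_dvd_mul_right ⟨β, hcross⟩
  have hβQ1 : β = Q 1 := by
    have h := hcross
    rw [← hαQ0] at h
    exact (mul_left_cancel₀ hαpos.ne' h).symm
  -- the candidate minimal sequence
  set e : ℤ := m (s + 1) with hedef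
  set M : ℕ → ℤ := Mseq Q e (m 0) with hMdef
  have hMsucc : ∀ r, M (r + 1) = ⌈((Q (r + 1) * M r + e : ℤ) : ℚ) / ((Q r : ℚ))⌉ :=
    fun r => rfl
  have hM0 : M 0 = m 0 := rfl
  have hMge : ∀ r, r ≤ s → Q (r + 1) * M r + e ≤ Q r * M (r + 1) := by
    intro r hr
    have hQr : (0:ℚ) < ((Q r : ℤ) : ℚ) := by exact_mod_cast hQpos r hr
    have h := Int.le_ceil (((Q (r + 1) * M r + e : ℤ) : ℚ) / ((Q r : ℚ)))
    rw [div_le_iff₀ hQr, ← hMsucc r] at h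
    have h' : Q (r + 1) * M r + e ≤ M (r + 1) * Q r := by exact_mod_cast h
    linarith
  have hMle : ∀ r, r ≤ s → ∀ k : ℤ, Q (r + 1) * M r + e ≤ Q r * k → M (r + 1) ≤ k := by
    intro r hr k hk
    have hQr : (0:ℚ) < ((Q r : ℤ) : ℚ) := by exact_mod_cast hQpos r hr
    rw [hMsucc r, Int.ceil_le, div_le_iff₀ hQr]
    have : ((Q (r + 1) * M r + e : ℤ) : ℚ) ≤ ((Q r * k : ℤ) : ℚ) := by exact_mod_cast hk
    push_cast at this ⊢
    linarith
  have hMend : M (s + 1) = m (s + 1) := by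
    rw [hMsucc s, hQs1, hQs]
    push_cast
    simp
    exact hedef
  have hMineq : ∀ r, 1 ≤ r → r ≤ s → M (r - 1) - b r * M r + M (r + 1) ≤ 0 := by
    intro r h1 h2
    obtain ⟨t, rfl⟩ : ∃ t, r = t + 1 := ⟨r - 1, by omega⟩
    simp only [Nat.add_sub_cancel]
    have hge := hMge t (by omega)
    have hrec := hQrec t (by omega)
    have hge' : Q (t + 1) * M t + e ≤ (b (t + 1) * Q (t + 1) - Q (t + 2)) * M (t + 1) := by
      rw [← hrec]; exact hge
    have hk : Q (t + 2) * M (t + 1) + e ≤ Q (t + 1) * (b (t + 1) * M (t + 1) - M t) := by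
      nlinarith [hge']
    have := hMle (t + 1) (by omega) _ hk
    omega
  -- lower bound via telescoping
  have key : ∀ d, d ≤ s → m (s + 1) ≤ Q (s - d) * m (s - d + 1) - Q (s - d + 1) * m (s - d) := by
    intro d
    induction d with
    | zero =>
      intro _
      simp only [Nat.sub_zero]
      rw [hQs, hQs1]
      omega
    | succ d ih =>
      intro hd
      have iht := ih (by omega)
      have ht : s - d = (s - (d + 1)) + 1 := by omega
      set t := s - (d + 1) with htdef
      rw [ht] at iht
      have hrec := hQrec t (by omega)
      have hin := hineq (t + 1) (by omega) (by omega)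
      simp only [Nat.add_sub_cancel] at hin
      have hq := hQpos (t + 1) (by omega)
      rw [hrec]
      nlinarith [iht, mul_nonneg hq.le
        (by linarith : (0:ℤ) ≤ b (t + 1) * m (t + 1) - m t - m (t + 2))]
  have keys := key s (le_refl s)
  simp only [Nat.sub_self] at keys
  -- conclude
  have hub : m 1 ≤ M 1 := hmin M hM0 hMend hMineq 1 (by omega)
  have hM1 : M 1 = ⌈((Q 1 * m 0 + e : ℤ) : ℚ) / ((Q 0 : ℚ))⌉ := hMsucc 0
  have hlb : ⌈((Q 1 * m 0 + e : ℤ) : ℚ) / ((Q 0 : ℚ))⌉ ≤ m 1 := by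
    have hQ0 : (0:ℚ) < ((Q 0 : ℤ) : ℚ) := by exact_mod_cast hQ0pos
    rw [Int.ceil_le, div_le_iff₀ hQ0]
    have : Q 1 * m 0 + e ≤ m 1 * Q 0 := by linarith [keys]
    exact_mod_cast this
  have hfin : m 1 = ⌈((Q 1 * m 0 + e : ℤ) : ℚ) / ((Q 0 : ℚ))⌉ := by
    rw [← hM1] at hlb ⊢
    omega
  rw [hfin, hαQ0, hβQ1]
  congr 1
  push_cast
  ring
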